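/- For all integers n ≥ 1 and q ≥ 1, every integer c with 1 ≤ c ≤ q, and all real numbers ε, α with 0 < ε < α ≤ 1/3, setting s = min(n, ⌈((2α − ε)/ε²)·((n·ln 2)/c + ln q)⌉), there exists a list of q subsets Q_1, …, Q_q of {1,…,n}, each of size exactly s, such that for every subset B ⊆ {1,…,n} with |B| ≤ (α − ε)·n, the number of indices i ∈ {1,…,q} with |Q_i ∩ B| ≥ α·s is strictly less than c. -/

import Mathlib

open scoped Classical

lemma log_lb {x : ℝ} (hx : 0 ≤ x) : 2*x/(2+x) ≤ Real.log (1+x) := by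
  have h2 : ∀ y ∈ Set.Ici (0:ℝ), HasDerivAt (fun t => Real.log (1+t) - 2*t/(2+t))
      (1/(1+y) - 4/(2+y)^2) y := by
    intro y hy
    simp only [Set.mem_Ici] at hy
    have h1y : (1:ℝ)+y ≠ 0 := by nlinarith
    have h2y : (2:ℝ)+y ≠ 0 := by nlinarith
    have d1 : HasDerivAt (fun t : ℝ => Real.log (1+t)) (1/(1+y)) y := by
      have := ((hasDerivAt_id y).const_add (1:ℝ)).log h1y
      simpa using this
    have d2 : HasDerivAt (fun t : ℝ => 2*t/(2+t)) (4/(2+y)^2) y := by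
      have := ((hasDerivAt_id y).const_mul (2:ℝ)).div ((hasDerivAt_id y).const_add (2:ℝ)) h2y
      refine this.congr_deriv ?_
      simp only [id]; ring
    exact d1.sub d2
  have key : ∀ y ∈ Set.Ici (0:ℝ), 0 ≤ Real.log (1+y) - 2*y/(2+y) := by
    have mono : MonotoneOn (fun t => Real.log (1+t) - 2*t/(2+t)) (Set.Ici (0:ℝ)) := by
      apply monotoneOn_of_deriv_nonneg (convex_Ici 0)
      · exact fun y hy => (h2 y hy).continuousAt.continuousWithinAt
      · intro y hy
        rw [interior_Ici] at hy
        exact ((h2 y (Set.mem_Ici.2 (le_of_lt hy))).differentiableAt).differentiableWithinAt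
      · intro y hy
        rw [interior_Ici] at hy
        rw [(h2 y (Set.mem_Ici.2 (le_of_lt hy))).deriv]
        have : (0:ℝ) < 1 + y := by linarith [hy.out]
        have : (0:ℝ) < 2 + y := by linarith [hy.out]
        rw [div_sub_div _ _ (by positivity) (by positivity), le_div_iff₀ (by positivity)]
        nlinarith [hy.out]
    intro y hy
    have := mono (Set.self_mem_Ici) hy hy.out
    simpa using this
  linarith [key x hx]

lemma kl_lb {ε α : ℝ} (hε : 0 < ε) (hεα : ε < α) (hα1 : α < 1) :
    ε^2/(2*α-ε) < α * Real.log (α/(α-ε)) - Real.log (1+ε) := by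
  set β := α - ε with hβ
  have hβ0 : 0 < β := by simp [hβ]; linarith
  have hα0 : 0 < α := lt_trans hε hεα
  have hδ : α/β = 1 + ε/β := by rw [hβ, eq_comm, one_add_div (ne_of_gt (sub_pos.2 hεα))]; ring
  have h1 : 2*(ε/β)/(2+ε/β) ≤ Real.log (1 + ε/β) := log_lb (by positivity)
  have h1' : 2*(ε/β)/(2+ε/β) = 2*ε/(2*α-ε) := by
    rw [hβ]
    have h3 : 2*α - ε > 0 := by linarith
    rw [add_div' _ _ _ (sub_pos.2 hεα).ne', ← mul_div_assoc, div_div_div_cancel_right₀ (sub_pos.2 hεα).ne']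
    ring
  have h2 : Real.log (1+ε) < ε := by
    have := Real.log_lt_sub_one_of_pos (x := 1+ε) (by linarith) (by linarith)
    linarith
  have h3 : 2*α - ε > 0 := by linarith
  rw [hδ]
  have h4 : α * (2*ε/(2*α-ε)) ≤ α * Real.log (1+ε/β) := by
    rw [← h1'] at *
    exact mul_le_mul_of_nonneg_left h1 (le_of_lt hα0)
  have h5 : α * (2*ε/(2*α-ε)) - ε = ε^2/(2*α-ε) := by
    rw [eq_div_iff h3.ne', sub_mul, mul_assoc, div_mul_cancel₀ _ h3.ne']
    ring
  linarith

lemma descFactorial_mul_pow_le {b n : ℕ} (h : b ≤ n) (r : ℕ) :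
    b.descFactorial r * n^r ≤ n.descFactorial r * b^r := by
  induction r with
  | zero => simp
  | succ r ih =>
    rw [Nat.descFactorial_succ, Nat.descFactorial_succ, pow_succ, pow_succ]
    calc (b - r) * b.descFactorial r * (n^r * n)
        = ((b-r) * n) * (b.descFactorial r * n^r) := by ring
      _ ≤ ((n-r) * b) * (n.descFactorial r * b^r) := by
          apply Nat.mul_le_mul _ ih
          rcases le_or_gt r b with hrb | hrb
          · have : (b - r) * n ≤ (n - r) * b := by
              have h1 : r * b ≤ r * n := Nat.mul_le_mul_left r h
              have := Nat.sub_le_sub_right (Nat.mul_le_mul_right n h) 0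
              zify [hrb, le_trans hrb h]
              nlinarith [Nat.sub_add_cancel hrb]
            exact this
          · simp [Nat.sub_eq_zero_of_le (le_of_lt hrb)]
      _ = (n-r) * n.descFactorial r * (b^r * b) := by ring

lemma choose_le_real {b n r : ℕ} (h : b ≤ n) (hn : 0 < n) {β : ℝ} (hβ : 0 ≤ β)
    (hbn : (b:ℝ) ≤ β * n) : (b.choose r : ℝ) ≤ β^r * (n.choose r : ℝ) := by
  have key : (b.choose r : ℝ) * n^r ≤ (n.choose r : ℝ) * b^r := by
    have hnat := descFactorial_mul_pow_le h r
    rw [Nat.descFactorial_eq_factorial_mul_choose, Nat.descFactorial_eq_factorial_mul_choose] at hnat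
    have h2 := (Nat.cast_le (α := ℝ)).2 hnat
    push_cast at h2
    have hfac : (0:ℝ) < (Nat.factorial r : ℝ) := by positivity
    nlinarith
  have hb : ((b:ℝ))^r ≤ β^r * (n:ℝ)^r := by
    rw [← mul_pow]
    exact pow_le_pow_left₀ (by positivity) hbn r
  have hnr : (0:ℝ) < (n:ℝ)^r := by positivity
  have h3 : (b.choose r : ℝ) * n^r ≤ (n.choose r : ℝ) * (β^r * n^r) := by
    calc (b.choose r : ℝ) * n^r ≤ (n.choose r : ℝ) * b^r := key
      _ ≤ (n.choose r : ℝ) * (β^r * n^r) :=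
        mul_le_mul_of_nonneg_left hb (Nat.cast_nonneg _)
  have := (mul_le_mul_iff_left₀ hnr).1 (by linarith [h3] : (b.choose r : ℝ) * n^r ≤ (β^r * (n.choose r:ℝ)) * n^r)
  exact this

lemma card_supersets {V : Type*} [DecidableEq V] [Fintype V] (T : Finset V) {s : ℕ}
    (h : T.card ≤ s) :
    ((Finset.powersetCard s (Finset.univ : Finset V)).filter (fun Q => T ⊆ Q)).card
      = (Fintype.card V - T.card).choose (s - T.card) := by
  rw [show Fintype.card V - T.card = (Finset.univ \ T).card by
        rw [Finset.card_sdiff_of_subset (Finset.subset_univ T), Finset.card_univ],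
      ← Finset.card_powersetCard]
  apply Finset.card_bij' (fun Q _ => Q \ T) (fun U _ => U ∪ T)
  · intro Q hQ
    simp only [Finset.mem_filter, Finset.mem_powersetCard] at hQ
    obtain ⟨⟨-, hcard⟩, hsub⟩ := hQ
    rw [Finset.mem_powersetCard]
    constructor
    · intro x hx; simp only [Finset.mem_sdiff] at hx ⊢
      exact ⟨Finset.mem_univ x, hx.2⟩
    · rw [Finset.card_sdiff_of_subset hsub, hcard]
  · intro U hU
    rw [Finset.mem_powersetCard] at hU
    obtain ⟨hsub, hcard⟩ := hU
    have hdisj : Disjoint U T := by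
      rw [Finset.disjoint_left]; intro x hx
      have := hsub hx; simp only [Finset.mem_sdiff] at this; exact this.2
    simp only [Finset.mem_filter, Finset.mem_powersetCard]
    refine ⟨⟨Finset.subset_univ _, ?_⟩, Finset.subset_union_right⟩
    rw [Finset.card_union_of_disjoint hdisj, hcard]
    omega
  · intro Q hQ
    simp only [Finset.mem_filter] at hQ
    exact Finset.sdiff_union_of_subset hQ.2
  · intro U hU
    rw [Finset.mem_powersetCard] at hU
    have hdisj : Disjoint U T := by
      rw [Finset.disjoint_left]; intro x hx
      have := hU.1 hx; simp only [Finset.mem_sdiff] at this; exact this.2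
    rw [Finset.union_sdiff_right, Finset.sdiff_eq_self_of_disjoint hdisj]
  

lemma sum_choose_inter {V : Type*} [DecidableEq V] [Fintype V] (B : Finset V) {s r : ℕ}
    (hr : r ≤ s) :
    ∑ Q ∈ Finset.powersetCard s (Finset.univ : Finset V), ((Q ∩ B).card.choose r)
      = B.card.choose r * (Fintype.card V - r).choose (s - r) := by
  have e1 : ∀ Q : Finset V, (Q ∩ B).card.choose r
      = ((Finset.powersetCard r B).filter (fun T => T ⊆ Q)).card := by
    intro Q
    rw [← Finset.card_powersetCard r (Q ∩ B)]
    congr 1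
    ext T
    simp only [Finset.mem_powersetCard, Finset.mem_filter, Finset.subset_inter_iff]
    tauto
  calc ∑ Q ∈ Finset.powersetCard s (Finset.univ : Finset V), ((Q ∩ B).card.choose r)
      = ∑ Q ∈ Finset.powersetCard s (Finset.univ : Finset V),
          ∑ T ∈ Finset.powersetCard r B, (if T ⊆ Q then 1 else 0) := by
        simp_rw [e1, Finset.card_filter]
    _ = ∑ T ∈ Finset.powersetCard r B,
          ∑ Q ∈ Finset.powersetCard s (Finset.univ : Finset V), (if T ⊆ Q then 1 else 0) :=
        Finset.sum_comm
    _ = ∑ T ∈ Finset.powersetCard r B, (Fintype.card V - r).choose (s - r) := by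
        apply Finset.sum_congr rfl
        intro T hT
        rw [Finset.mem_powersetCard] at hT
        rw [← Finset.card_filter]
        rw [card_supersets T (le_trans (le_of_eq hT.2) hr), hT.2]
    _ = B.card.choose r * (Fintype.card V - r).choose (s - r) := by
        rw [Finset.sum_const, Finset.card_powersetCard, smul_eq_mul]

lemma mgf_bound {V : Type*} [DecidableEq V] [Fintype V] (B : Finset V) {s : ℕ}
    (hs : s ≤ Fintype.card V) {β lam : ℝ} (hβ0 : 0 ≤ β) (hlam : 1 ≤ lam)
    (hB : (B.card : ℝ) ≤ β * (Fintype.card V : ℝ)) (hn : 0 < Fintype.card V) :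
    ∑ Q ∈ Finset.powersetCard s (Finset.univ : Finset V), lam ^ ((Q ∩ B).card)
      ≤ ((Fintype.card V).choose s : ℝ) * (1 + β * (lam - 1))^s := by
  set n := Fintype.card V with hcard
  set x := lam - 1 with hx
  have hx0 : 0 ≤ x := by simp [hx]; linarith
  -- step 1: expand lam^m
  have step1 : ∀ Q ∈ Finset.powersetCard s (Finset.univ : Finset V),
      lam ^ ((Q ∩ B).card) = ∑ r ∈ Finset.range (s+1), ((Q ∩ B).card.choose r : ℝ) * x^r := by
    intro Q hQ
    rw [Finset.mem_powersetCard] at hQ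
    have hm : (Q ∩ B).card ≤ s := by
      rw [← hQ.2]; exact Finset.card_le_card Finset.inter_subset_left
    set m := (Q ∩ B).card with hm'
    have expand : lam ^ m = ∑ r ∈ Finset.range (m+1), (m.choose r : ℝ) * x^r := by
      have := add_pow x (1:ℝ) m
      simp only [one_pow, mul_one] at this
      rw [show lam = x + 1 by simp [hx]]
      rw [this]
      apply Finset.sum_congr rfl
      intro r _
      ring
    rw [expand]
    apply Finset.sum_subset
    · intro r hr
      simp only [Finset.mem_range] at hr ⊢
      omega
    · intro r _ hr
      simp only [Finset.mem_range, not_lt] at hr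
      rw [Nat.choose_eq_zero_of_lt (by omega)]
      simp
  rw [Finset.sum_congr rfl step1, Finset.sum_comm]
  -- step 2+3
  have step3 : ∀ r ∈ Finset.range (s+1),
      ∑ Q ∈ Finset.powersetCard s (Finset.univ : Finset V), ((Q ∩ B).card.choose r : ℝ) * x^r
        ≤ (n.choose s : ℝ) * ((s.choose r : ℝ) * (β*x)^r) := by
    intro r hr
    simp only [Finset.mem_range] at hr
    have hrs : r ≤ s := by omega
    rw [← Finset.sum_mul]
    have hsum : ∑ Q ∈ Finset.powersetCard s (Finset.univ : Finset V),
        ((Q ∩ B).card.choose r : ℝ) = (B.card.choose r : ℝ) * ((n - r).choose (s - r) : ℝ) := by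
      rw [← Nat.cast_sum]
      rw [sum_choose_inter B hrs]
      push_cast; ring
    rw [hsum]
    have hkey : (B.card.choose r : ℝ) ≤ β^r * (n.choose r : ℝ) :=
      choose_le_real (le_trans (Finset.card_le_card (Finset.subset_univ B))
        (by rw [Finset.card_univ])) hn hβ0 hB
    have hid : (n.choose r : ℝ) * ((n - r).choose (s - r) : ℝ)
        = (n.choose s : ℝ) * (s.choose r : ℝ) := by
      rw [← Nat.cast_mul, ← Nat.cast_mul, ← Nat.choose_mul (n := n) hrs]
    have hxr : (0:ℝ) ≤ x^r := by positivity
    have hc2 : (0:ℝ) ≤ ((n - r).choose (s - r) : ℝ) := Nat.cast_nonneg _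
    calc (B.card.choose r : ℝ) * ((n - r).choose (s - r) : ℝ) * x^r
        ≤ β^r * (n.choose r : ℝ) * ((n - r).choose (s - r) : ℝ) * x^r := by
          apply mul_le_mul_of_nonneg_right (mul_le_mul_of_nonneg_right hkey hc2) hxr
      _ = β^r * ((n.choose r : ℝ) * ((n - r).choose (s - r) : ℝ)) * x^r := by ring
      _ = β^r * ((n.choose s : ℝ) * (s.choose r : ℝ)) * x^r := by rw [hid]
      _ = (n.choose s : ℝ) * ((s.choose r : ℝ) * (β*x)^r) := by rw [mul_pow]; ring
  calc ∑ r ∈ Finset.range (s+1), ∑ Q ∈ Finset.powersetCard s (Finset.univ : Finset V),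
        ((Q ∩ B).card.choose r : ℝ) * x^r
      ≤ ∑ r ∈ Finset.range (s+1), (n.choose s : ℝ) * ((s.choose r : ℝ) * (β*x)^r) :=
        Finset.sum_le_sum step3
    _ = (n.choose s : ℝ) * (1 + β * x)^s := by
        rw [← Finset.mul_sum]
        congr 1
        have := add_pow (β*x) (1:ℝ) s
        simp only [one_pow, mul_one] at this
        rw [add_comm (1:ℝ) (β*x), this]
        apply Finset.sum_congr rfl
        intro r _
        ring

lemma badcount_lt {V : Type*} [DecidableEq V] [Fintype V] (B : Finset V) {s : ℕ}
    (hs1 : 1 ≤ s) (hs : s ≤ Fintype.card V) (hn : 0 < Fintype.card V)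
    {ε a : ℝ} (hε : 0 < ε) (hεα : ε < a) (hα1 : a < 1)
    (hB : (B.card : ℝ) ≤ (a - ε) * (Fintype.card V : ℝ)) :
    ((((Finset.powersetCard s (Finset.univ : Finset V)).filter
        (fun Q => a * (s:ℝ) ≤ ((Q ∩ B).card : ℝ))).card : ℝ))
      < ((Fintype.card V).choose s : ℝ) * Real.exp (-(ε^2/(2*a-ε)) * s) := by
  set n := Fintype.card V with hcard
  set lam := a / (a - ε) with hlam'
  have hβ0 : (0:ℝ) < a - ε := by linarith
  have ha0 : (0:ℝ) < a := by linarith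
  have hlam1 : 1 < lam := by
    rw [hlam', lt_div_iff₀ hβ0]; linarith
  have hlam0 : 0 < lam := by linarith
  -- mgf bound with β = a - ε
  have hmgf := mgf_bound B hs (le_of_lt hβ0) (le_of_lt hlam1) hB hn
  have hβlam : 1 + (a - ε) * (lam - 1) = 1 + ε := by
    rw [hlam']; field_simp
    ring
  rw [hβlam] at hmgf
  set F := (Finset.powersetCard s (Finset.univ : Finset V)).filter
      (fun Q => a * (s:ℝ) ≤ ((Q ∩ B).card : ℝ)) with hF
  set L := Real.exp (a * s * Real.log lam) with hL
  have hL0 : 0 < L := Real.exp_pos _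
  -- each Q in F has lam ^ card ≥ L
  have hterm : ∀ Q ∈ F, L ≤ lam ^ ((Q ∩ B).card) := by
    intro Q hQ
    rw [hF, Finset.mem_filter] at hQ
    have h1 : lam ^ ((Q ∩ B).card) = Real.exp (((Q ∩ B).card : ℝ) * Real.log lam) := by
      rw [← Real.log_pow, Real.exp_log (by positivity)]
    rw [h1, hL, Real.exp_le_exp]
    exact mul_le_mul_of_nonneg_right hQ.2 (Real.log_nonneg (le_of_lt hlam1))
  have hsum1 : (F.card : ℝ) * L ≤ ∑ Q ∈ F, lam ^ ((Q ∩ B).card) := by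
    have := Finset.card_nsmul_le_sum F (fun Q => lam ^ ((Q ∩ B).card)) L hterm
    simpa [nsmul_eq_mul] using this
  have hsum2 : ∑ Q ∈ F, lam ^ ((Q ∩ B).card)
      ≤ ∑ Q ∈ Finset.powersetCard s (Finset.univ : Finset V), lam ^ ((Q ∩ B).card) := by
    apply Finset.sum_le_sum_of_subset_of_nonneg (Finset.filter_subset _ _)
    intro Q _ _
    positivity
  have hchain : (F.card : ℝ) * L ≤ (n.choose s : ℝ) * (1 + ε)^s :=
    le_trans hsum1 (le_trans hsum2 hmgf)
  -- analytic step
  have hkl := kl_lb hε hεα hα1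
  have hexp : (n.choose s : ℝ) * (1 + ε)^s
      < ((n.choose s : ℝ) * Real.exp (-(ε^2/(2*a-ε)) * s)) * L := by
    have hC : (0:ℝ) < (n.choose s : ℝ) := by
      exact_mod_cast Nat.cast_pos.2 (Nat.choose_pos hs)
    have h1 : (1 + ε)^s = Real.exp ((s:ℝ) * Real.log (1 + ε)) := by
      rw [← Real.log_pow, Real.exp_log (by positivity)]
    rw [h1, hL, mul_assoc, ← Real.exp_add, mul_lt_mul_iff_right₀ hC, Real.exp_lt_exp]
    have hs0 : (1:ℝ) ≤ (s:ℝ) := by exact_mod_cast hs1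
    have halog : Real.log lam = Real.log (a / (a - ε)) := by rw [hlam']
    have hstrict : (s:ℝ) * (ε^2/(2*a-ε)) < (s:ℝ) * (a * Real.log (a/(a-ε)) - Real.log (1+ε)) := by
      apply mul_lt_mul_of_pos_left _ (by linarith : (0:ℝ) < (s:ℝ))
      exact hkl
    rw [halog]
    nlinarith [hstrict]
  have := lt_of_le_of_lt hchain hexp
  exact (mul_lt_mul_iff_left₀ hL0).1 this

set_option maxHeartbeats 2000000 in
theorem exists_good_committees (n q c : ℕ) (ε α : ℝ) (hn : 1 ≤ n) (hq : 1 ≤ q)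
    (hc1 : 1 ≤ c) (hcq : c ≤ q) (hε : 0 < ε) (hεα : ε < α) (hα : α ≤ 1 / 3) :
    ∀ s : ℕ, s = min n
        ⌈((2 * α - ε) / ε ^ 2) * (((n : ℝ) * Real.log 2) / (c : ℝ) + Real.log q)⌉₊ →
      ∃ Q : Fin q → Finset (Fin n),
        (∀ i : Fin q, (Q i).card = s) ∧
        ∀ B : Finset (Fin n), (B.card : ℝ) ≤ (α - ε) * (n : ℝ) →
          ((Finset.univ.filter
              (fun i : Fin q => (α * (s : ℝ) ≤ ((Q i ∩ B).card : ℝ)))).card : ℝ) < c := by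
  intro s hsdef
  have hα0 : (0:ℝ) < α := lt_trans hε hεα
  have hα1 : α < 1 := lt_of_le_of_lt hα (by norm_num)
  have hβ0 : (0:ℝ) < α - ε := by linarith
  have hsn : s ≤ n := hsdef ▸ Nat.min_le_left _ _
  have hcFin : Fintype.card (Fin n) = n := Fintype.card_fin n
  have hc0 : (0:ℝ) < c := by exact_mod_cast hc1
  rcases lt_or_ge ((α - ε) * (n:ℝ)) (α * (s:ℝ)) with hcase | hcase
  · -- trivial case: α s exceeds the max possible |B|
    obtain ⟨Q0, hQ0⟩ := Finset.powersetCard_nonempty_of_le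
      (by rw [Finset.card_univ, hcFin]; exact hsn :
        s ≤ (Finset.univ : Finset (Fin n)).card)
    rw [Finset.mem_powersetCard] at hQ0
    refine ⟨fun _ => Q0, fun _ => hQ0.2, ?_⟩
    intro B hB
    have : (Finset.univ.filter
        (fun i : Fin q => (α * (s : ℝ) ≤ ((Q0 ∩ B).card : ℝ)))) = ∅ := by
      apply Finset.filter_false_of_mem
      intro i _
      push_neg
      calc ((Q0 ∩ B).card : ℝ) ≤ (B.card : ℝ) := by
            exact_mod_cast Finset.card_le_card Finset.inter_subset_right
        _ ≤ (α - ε) * n := hB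
        _ < α * s := hcase
    rw [this]
    simpa using hc0
  · -- main case
    have hn0 : 0 < n := hn
    have hsltn : s < n := by
      by_contra h
      have : s = n := le_antisymm hsn (not_lt.1 h)
      rw [this] at hcase
      have h1 : (1:ℝ) ≤ (n:ℝ) := by exact_mod_cast hn
      nlinarith
    set x := ((2 * α - ε) / ε ^ 2) * (((n : ℝ) * Real.log 2) / (c : ℝ) + Real.log q) with hx
    have hxpos : 0 < x := by
      apply mul_pos
      · apply div_pos (by linarith) (by positivity)
      · have h1 : 0 < (n : ℝ) * Real.log 2 / c := by
          apply div_pos (by positivity)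
          exact hc0
        have h2 : 0 ≤ Real.log q := Real.log_nonneg (by exact_mod_cast hq)
        linarith
    have hsm : s = ⌈x⌉₊ := by omega
    have hs1 : 1 ≤ s := by
      rw [hsm]
      exact Nat.one_le_ceil_iff.2 hxpos
    have hsx : x ≤ (s:ℝ) := by
      rw [hsm]; exact Nat.le_ceil x
    -- setup
    set 𝒮 : Finset (Finset (Fin n)) := Finset.powersetCard s Finset.univ with h𝒮
    set N : ℕ := 𝒮.card with hN
    have hNval : N = n.choose s := by
      rw [hN, h𝒮, Finset.card_powersetCard, Finset.card_univ, hcFin]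
    have hN0 : 0 < N := by rw [hNval]; exact Nat.choose_pos hsn
    set p : ℝ := Real.exp (-(ε^2/(2*α-ε)) * s) with hp
    have hp0 : 0 < p := Real.exp_pos _
    set badSet : Finset (Fin n) → Finset (Finset (Fin n)) :=
      fun B => 𝒮.filter (fun Q => α * (s:ℝ) ≤ ((Q ∩ B).card : ℝ)) with hbadSet
    have hbadlt : ∀ B : Finset (Fin n), (B.card : ℝ) ≤ (α - ε) * n →
        ((badSet B).card : ℝ) < N * p := by
      intro B hB
      have := badcount_lt (V := Fin n) B hs1 (by rw [hcFin]; exact hsn)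
        (by rw [hcFin]; exact hn0) hε hεα hα1 (by rw [hcFin]; exact hB)
      rw [hcFin, ← hNval] at this
      exact this
    set 𝓑 : Finset (Finset (Fin n)) :=
      (Finset.univ : Finset (Fin n)).powerset.filter
        (fun B => (B.card : ℝ) ≤ (α - ε) * n) with h𝓑
    set T := Fintype.piFinset (fun _ : Fin q => 𝒮) with hT
    have hTcard : T.card = N ^ q := by
      rw [hT, Fintype.card_piFinset]
      simp [hN, Finset.card_univ]
    set Bad := T.filter (fun Q => ∃ B ∈ 𝓑,
      c ≤ (Finset.univ.filter
        (fun i : Fin q => α * (s:ℝ) ≤ ((Q i ∩ B).card : ℝ))).card) with hBad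
    set A : Finset (Fin n) → Finset (Fin q) → Finset (Fin q → Finset (Fin n)) :=
      fun B S => Fintype.piFinset (fun i => if i ∈ S then badSet B else 𝒮) with hA
    -- covering
    have hcover : Bad ⊆ (𝓑 ×ˢ Finset.powersetCard c (Finset.univ : Finset (Fin q))).biUnion
        (fun P => A P.1 P.2) := by
      intro f hf
      rw [hBad, Finset.mem_filter] at hf
      obtain ⟨hfT, B, hB𝓑, hcount⟩ := hf
      obtain ⟨S, hSsub, hScard⟩ := Finset.exists_subset_card_eq hcount
      rw [Finset.mem_biUnion]
      refine ⟨(B, S), ?_, ?_⟩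
      · rw [Finset.mem_product]
        exact ⟨hB𝓑, Finset.mem_powersetCard.2 ⟨Finset.subset_univ _, hScard⟩⟩
      · rw [hA, Fintype.mem_piFinset]
        intro i
        by_cases hiS : i ∈ S
        · simp only [hiS, if_true]
          rw [hbadSet, Finset.mem_filter]
          have hi := hSsub hiS
          rw [Finset.mem_filter] at hi
          exact ⟨(Fintype.mem_piFinset.1 hfT) i, hi.2⟩
        · simp only [hiS, if_false]
          exact (Fintype.mem_piFinset.1 hfT) i
    -- card of each A B S
    have hAcard : ∀ B : Finset (Fin n), ∀ S : Finset (Fin q), S.card = c →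
        (A B S).card = (badSet B).card ^ c * N ^ (q - c) := by
      intro B S hS
      rw [hA, Fintype.card_piFinset]
      simp only [apply_ite Finset.card]
      rw [Finset.prod_ite (fun _ => (badSet B).card) (fun _ => 𝒮.card)]
      rw [Finset.prod_const, Finset.prod_const]
      congr 1
      · congr 1
        rw [← hS]
        congr 1
        ext i; simp
      · congr 1
        have : (Finset.univ.filter (fun i : Fin q => ¬ i ∈ S)).card
            = q - S.card := by
          rw [Finset.filter_not, Finset.card_sdiff_of_subset (Finset.filter_subset _ _)]
          congr 1
          · rw [Finset.card_univ, Fintype.card_fin]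
          · congr 1; ext i; simp
        rw [this, hS]
    -- counting
    have hprodNe : (𝓑 ×ˢ Finset.powersetCard c (Finset.univ : Finset (Fin q))).Nonempty := by
      apply Finset.Nonempty.product
      · refine ⟨∅, ?_⟩
        rw [h𝓑, Finset.mem_filter]
        constructor
        · exact Finset.mem_powerset.2 (Finset.empty_subset _)
        · simp; positivity
      · apply Finset.powersetCard_nonempty_of_le
        rw [Finset.card_univ, Fintype.card_fin]; exact hcq
    have hBadlt : (Bad.card : ℝ) < (N:ℝ) ^ q := by
      have h1 : Bad.card ≤ ∑ P ∈ 𝓑 ×ˢ Finset.powersetCard c (Finset.univ : Finset (Fin q)),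
          (A P.1 P.2).card :=
        le_trans (Finset.card_le_card hcover) (Finset.card_biUnion_le)
      have h2 : ∀ P ∈ 𝓑 ×ˢ Finset.powersetCard c (Finset.univ : Finset (Fin q)),
          ((A P.1 P.2).card : ℝ) < ((N:ℝ) * p) ^ c * (N:ℝ) ^ (q - c) := by
        rintro ⟨B, S⟩ hP
        rw [Finset.mem_product] at hP
        have hB𝓑 := hP.1
        rw [h𝓑, Finset.mem_filter] at hB𝓑
        have hScard := (Finset.mem_powersetCard.1 hP.2).2
        rw [hAcard B S hScard]
        push_cast
        have hblt := hbadlt B hB𝓑.2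
        have hNq : (0:ℝ) < (N:ℝ) ^ (q - c) := by positivity
        apply mul_lt_mul_of_pos_right _ hNq
        apply pow_lt_pow_left₀ hblt (Nat.cast_nonneg _)
        omega
      calc (Bad.card : ℝ)
          ≤ ∑ P ∈ 𝓑 ×ˢ Finset.powersetCard c (Finset.univ : Finset (Fin q)),
              ((A P.1 P.2).card : ℝ) := by exact_mod_cast h1
        _ < ∑ P ∈ 𝓑 ×ˢ Finset.powersetCard c (Finset.univ : Finset (Fin q)),
              ((N:ℝ) * p) ^ c * (N:ℝ) ^ (q - c) :=
            Finset.sum_lt_sum_of_nonempty hprodNe h2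
        _ = ((𝓑 ×ˢ Finset.powersetCard c (Finset.univ : Finset (Fin q))).card : ℝ)
              * (((N:ℝ) * p) ^ c * (N:ℝ) ^ (q - c)) := by
            rw [Finset.sum_const, nsmul_eq_mul]
        _ ≤ ((2:ℝ) ^ n * (q:ℝ) ^ c) * (((N:ℝ) * p) ^ c * (N:ℝ) ^ (q - c)) := by
            apply mul_le_mul_of_nonneg_right _ (by positivity)
            rw [Finset.card_product]
            push_cast
            have e1 : (𝓑.card : ℝ) ≤ (2:ℝ)^n := by
              have h1 : 𝓑.card ≤ 2^n := by
                have h2 : 𝓑.card ≤ (Finset.univ : Finset (Fin n)).powerset.card :=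
                  Finset.card_le_card (Finset.filter_subset _ _)
                rwa [Finset.card_powerset, Finset.card_univ, hcFin] at h2
              exact_mod_cast h1
            have e2 : ((Finset.powersetCard c (Finset.univ : Finset (Fin q))).card : ℝ)
                ≤ (q:ℝ)^c := by
              rw [Finset.card_powersetCard, Finset.card_univ, Fintype.card_fin]
              exact_mod_cast Nat.choose_le_pow q c
            exact mul_le_mul e1 e2 (by positivity) (by positivity)
        _ = ((2:ℝ) ^ n * (q:ℝ) ^ c * p ^ c) * ((N:ℝ) ^ c * (N:ℝ) ^ (q - c)) := by
            rw [mul_pow]; ring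
        _ ≤ 1 * ((N:ℝ) ^ c * (N:ℝ) ^ (q - c)) := by
            apply mul_le_mul_of_nonneg_right _ (by positivity)
            -- key exponent computation
            have hq0 : (0:ℝ) < q := by exact_mod_cast hq
            have hexp : (n:ℝ) * Real.log 2 + c * Real.log q ≤ c * (ε^2/(2*α-ε)) * s := by
              have h2αε : (2*α-ε) ≠ 0 := by linarith
              have hεne : ε ≠ 0 := ne_of_gt hε
              have hK1 : ε^2/(2*α-ε) * ((2*α-ε)/ε^2) = 1 := by field_simp
              have hmul : (ε^2/(2*α-ε)) * x = (n:ℝ) * Real.log 2 / c + Real.log q := by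
                rw [hx, ← mul_assoc, hK1, one_mul]
              have h3 : (ε^2/(2*α-ε)) * x ≤ (ε^2/(2*α-ε)) * s :=
                mul_le_mul_of_nonneg_left hsx
                  (div_nonneg (by positivity) (by linarith))
              rw [hmul] at h3
              have := mul_le_mul_of_nonneg_left h3 (le_of_lt hc0)
              calc (n:ℝ) * Real.log 2 + c * Real.log q
                  = c * ((n:ℝ) * Real.log 2 / c + Real.log q) := by field_simp
                _ ≤ c * ((ε^2/(2*α-ε)) * s) := this
                _ = c * (ε^2/(2*α-ε)) * s := by ring
            have h2n : (2:ℝ)^n = Real.exp ((n:ℝ) * Real.log 2) := by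
              rw [← Real.log_pow, Real.exp_log (by positivity)]
            have hqc : (q:ℝ)^c = Real.exp ((c:ℝ) * Real.log q) := by
              rw [← Real.log_pow, Real.exp_log (by positivity)]
            have hpc : p^c = Real.exp ((c:ℝ) * (-(ε^2/(2*α-ε)) * s)) := by
              rw [hp, ← Real.exp_nat_mul]
            rw [h2n, hqc, hpc, ← Real.exp_add, ← Real.exp_add]
            rw [show (1:ℝ) = Real.exp 0 by rw [Real.exp_zero]]
            rw [Real.exp_le_exp]
            nlinarith [hexp]
        _ = (N:ℝ) ^ q := by
            rw [one_mul, ← pow_add]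
            congr 1
            omega
    have hBadT : Bad.card < T.card := by
      have : ((N:ℝ))^q = (((N^q : ℕ)):ℝ) := by push_cast; ring
      rw [hTcard]
      exact_mod_cast (this ▸ hBadlt)
    -- extract a good tuple
    have hgood : ∃ f, f ∈ T ∧ f ∉ Bad := by
      by_contra h
      push_neg at h
      have hsub : T ⊆ Bad := fun f hf => h f hf
      exact absurd (Finset.card_le_card hsub) (not_le.2 hBadT)
    obtain ⟨f, hfT, hfBad⟩ := hgood
    refine ⟨f, ?_, ?_⟩
    · intro i
      have := (Fintype.mem_piFinset.1 hfT) i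
      rw [h𝒮, Finset.mem_powersetCard] at this
      exact this.2
    · intro B hB
      rw [hBad, Finset.mem_filter] at hfBad
      push_neg at hfBad
      have := hfBad hfT B (by
        rw [h𝓑, Finset.mem_filter]
        exact ⟨Finset.mem_powerset.2 (Finset.subset_univ _), hB⟩)
      exact_mod_cast this
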